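/- Let $n,r,k,t,a$ be positive integers with $k\ge2$, $t+1\le r\le n$ and $t+1\le a\le n$. For $b\in\{t+1,\dots,a\}$ let $\mathcal{N}_b$ denote the set of $F\in\mathcal{L}_{n,r,k}$ with $M_t\subseteq F$ and $|F\cap M_a|=b$. Then $\sum_{i=1}^{a-t} i\,|\mathcal{N}_{t+i}| = (a-t)\binom{n-t-1}{r-t-1}k^{r-t-1}$. -/

import Mathlib

open Finset

attribute [local instance] Classical.propDecidable

/-- The ground set `[n] × [k]`. -/
def box (n k : ℕ) : Finset (ℕ × ℕ) := Finset.Icc 1 n ×ˢ Finset.Icc 1 k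

/-- A `k`-signed set on `[n]`: a subset of `[n] × [k]` with pairwise distinct first coordinates. -/
def IsSigned (n k : ℕ) (T : Finset (ℕ × ℕ)) : Prop :=
  T ⊆ box n k ∧ (T.image Prod.fst).card = T.card

/-- `L n r k`: the collection of `k`-signed `r`-sets on `[n]`. -/
def L (n r k : ℕ) : Finset (Finset (ℕ × ℕ)) :=
  (box n k).powerset.filter (fun F => F.card = r ∧ (F.image Prod.fst).card = r)

/-- A family is `t`-intersecting if any two members meet in at least `t` elements. -/
def IsTIntersecting (t : ℕ) (F : Finset (Finset (ℕ × ℕ))) : Prop :=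
  ∀ A ∈ F, ∀ B ∈ F, t ≤ (A ∩ B).card

/-- `T` is a `t`-cover of the family `F`: a `k`-signed set meeting every member in ≥ `t` points. -/
def IsTCover (n k t : ℕ) (F : Finset (Finset (ℕ × ℕ))) (T : Finset (ℕ × ℕ)) : Prop :=
  IsSigned n k T ∧ ∀ A ∈ F, t ≤ (T ∩ A).card

/-- `F` is a maximal `t`-intersecting subfamily of `L n r k`. -/
def IsMaximalTIntersecting (n r k t : ℕ) (F : Finset (Finset (ℕ × ℕ))) : Prop :=
  F ⊆ L n r k ∧ IsTIntersecting t F ∧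
    ∀ G ⊆ L n r k, IsTIntersecting t G → F ⊆ G → G = F

/-- A `t`-intersecting family is trivial if all members contain a fixed `k`-signed `t`-set. -/
def IsTrivial (n k t : ℕ) (F : Finset (Finset (ℕ × ℕ))) : Prop :=
  ∃ T, IsSigned n k T ∧ T.card = t ∧ ∀ A ∈ F, T ⊆ A

/-- `Msig d = {(1,1),(2,1),…,(d,1)}`. -/
def Msig (d : ℕ) : Finset (ℕ × ℕ) := (Finset.Icc 1 d).image (fun x => (x, 1))

/-- The family `H₁(n,r,k,ℓ,t)`. -/
def H1 (n r k l t : ℕ) : Finset (Finset (ℕ × ℕ)) :=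
  (L n r k).filter (fun F =>
    (Msig t ⊆ F ∧ t + 1 ≤ (F ∩ Msig l).card) ∨
    (¬ Msig t ⊆ F ∧ (F ∩ Msig l).card = l - 1))

/-- The family `H₂(n,r,k,c,t)`. -/
def H2 (n r k c t : ℕ) : Finset (Finset (ℕ × ℕ)) :=
  (L n r k).filter (fun F =>
    (Msig t ⊆ F ∧ t + 1 ≤ (F ∩ Msig r).card) ∨
    (F ∩ Msig r = Msig t ∧ Msig c \ Msig r ⊆ F) ∨
    (¬ Msig t ⊆ F ∧ (F ∩ Msig r).card = r - 1 ∧ (F ∩ (Msig c \ Msig r)).card = 1))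

/-- The set of all `t`-covers of `F` of size `t+1`. -/
noncomputable def TauSet (n k t : ℕ) (F : Finset (Finset (ℕ × ℕ))) : Finset (Finset (ℕ × ℕ)) :=
  (box n k).powerset.filter (fun T => IsTCover n k t F T ∧ T.card = t + 1)
lemma graph_count (k : ℕ) (S : Finset ℕ) :
    ((S ×ˢ Finset.Icc 1 k).powerset.filter
      (fun G => G.image Prod.fst = S ∧ G.card = S.card)).card = k ^ S.card := by
  have key : ∀ G ∈ (S ×ˢ Finset.Icc 1 k).powerset.filter
      (fun G => G.image Prod.fst = S ∧ G.card = S.card),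
      ∀ a ∈ S, ∃ y, (a, y) ∈ G := by
    intro G hG a ha
    simp only [mem_filter, mem_powerset] at hG
    rw [← hG.2.1] at ha
    obtain ⟨⟨x, y⟩, hp, hpa⟩ := Finset.mem_image.mp ha
    subst hpa
    exact ⟨y, hp⟩
  have hpi : (S.pi (fun _ => Finset.Icc 1 k)).card = k ^ S.card := by
    rw [Finset.card_pi, Finset.prod_const, Nat.card_Icc, Nat.add_sub_cancel]
  have hj : ∀ g ∈ S.pi (fun _ => Finset.Icc 1 k),
      S.attach.image (fun a => (a.1, g a.1 a.2)) ∈ (S ×ˢ Finset.Icc 1 k).powerset.filter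
        (fun G => G.image Prod.fst = S ∧ G.card = S.card) := by
    intro g hg
    simp only [Finset.mem_pi] at hg
    simp only [mem_filter, mem_powerset]
    have himg : (S.attach.image (fun a => (a.1, g a.1 a.2))).image Prod.fst = S := by
      rw [Finset.image_image]
      ext x
      simp
    refine ⟨?_, himg, ?_⟩
    · intro p hp
      simp only [Finset.mem_image] at hp
      obtain ⟨a, _, rfl⟩ := hp
      exact Finset.mem_product.mpr ⟨a.2, hg a.1 a.2⟩
    · rw [Finset.card_image_of_injOn (fun x _ y _ hxy => Subtype.ext (congrArg Prod.fst hxy)),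
        Finset.card_attach]
  rw [← hpi]
  refine Finset.card_bij' (fun G hG => fun a ha => Classical.choose (key G hG a ha))
    (fun g _ => S.attach.image (fun a => (a.1, g a.1 a.2))) ?_ (fun g hg => hj g hg) ?_ ?_
  · intro G hG
    simp only [Finset.mem_pi]
    intro a ha
    have hmem := Classical.choose_spec (key G hG a ha)
    simp only [mem_filter, mem_powerset] at hG
    exact (Finset.mem_product.mp (hG.1 hmem)).2
  · intro G hG
    have hsub : S.attach.image (fun a : {x // x ∈ S} =>
        (a.1, Classical.choose (key G hG a.1 a.2))) ⊆ G := by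
      intro p hp
      simp only [Finset.mem_image] at hp
      obtain ⟨a, _, rfl⟩ := hp
      exact Classical.choose_spec (key G hG a.1 a.2)
    have hG' := hG
    simp only [mem_filter, mem_powerset] at hG'
    apply Finset.eq_of_subset_of_card_le hsub
    rw [Finset.card_image_of_injOn (fun x _ y _ hxy => Subtype.ext (congrArg Prod.fst hxy)),
      Finset.card_attach, hG'.2.2]
  · intro g hg
    funext a ha
    have hmem := Classical.choose_spec (key _ (hj g hg) a ha)
    simp only [Finset.mem_image, Finset.mem_attach, true_and] at hmem
    obtain ⟨b, heq⟩ := hmem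
    have h1 : (b : ℕ) = a := congrArg Prod.fst heq
    have h2 := congrArg Prod.snd heq
    simp only at h1 h2
    subst h1
    simpa using h2.symm

lemma count_signed (A : Finset ℕ) (r k : ℕ) :
    ((A ×ˢ Finset.Icc 1 k).powerset.filter
      (fun G => G.card = r ∧ (G.image Prod.fst).card = r)).card = A.card.choose r * k ^ r := by
  rw [Finset.card_eq_sum_card_fiberwise (f := fun G => G.image Prod.fst)
    (t := A.powersetCard r) ?maps]
  case maps =>
    intro G hG
    simp only [Finset.mem_coe, mem_filter, mem_powerset] at hG ⊢
    rw [Finset.mem_powersetCard]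
    refine ⟨?_, hG.2.2⟩
    intro x hx
    obtain ⟨p, hp, rfl⟩ := Finset.mem_image.mp hx
    exact (Finset.mem_product.mp (hG.1 hp)).1
  have step : ∀ S ∈ A.powersetCard r,
      (((A ×ˢ Finset.Icc 1 k).powerset.filter
        (fun G => G.card = r ∧ (G.image Prod.fst).card = r)).filter
        (fun G => G.image Prod.fst = S)).card = k ^ r := by
    intro S hS
    rw [Finset.mem_powersetCard] at hS
    have : (((A ×ˢ Finset.Icc 1 k).powerset.filter
        (fun G => G.card = r ∧ (G.image Prod.fst).card = r)).filter
        (fun G => G.image Prod.fst = S)) =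
        ((S ×ˢ Finset.Icc 1 k).powerset.filter
          (fun G => G.image Prod.fst = S ∧ G.card = S.card)) := by
      ext G
      simp only [mem_filter, mem_powerset]
      constructor
      · rintro ⟨⟨h1, h2, h3⟩, h4⟩
        refine ⟨?_, h4, by rw [h2, hS.2]⟩
        intro p hp
        refine Finset.mem_product.mpr ⟨?_, (Finset.mem_product.mp (h1 hp)).2⟩
        rw [← h4]
        exact Finset.mem_image_of_mem _ hp
      · rintro ⟨h1, h2, h3⟩
        have hcard : G.card = r := by rw [h3, hS.2]
        refine ⟨⟨fun p hp => ?_, hcard, by rw [h2, hS.2]⟩, h2⟩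
        obtain ⟨hp1, hp2⟩ := Finset.mem_product.mp (h1 hp)
        exact Finset.mem_product.mpr ⟨hS.1 hp1, hp2⟩
    rw [this, graph_count, hS.2]
  rw [Finset.sum_congr rfl step, Finset.sum_const, Finset.card_powersetCard, smul_eq_mul]

lemma count_supset (n r k s : ℕ) (I : Finset (ℕ × ℕ)) (hIbox : I ⊆ box n k)
    (hIcard : I.card = s) (hIimg : (I.image Prod.fst).card = s) (hsr : s ≤ r) :
    ((L n r k).filter (fun F => I ⊆ F)).card = (n - s).choose (r - s) * k ^ (r - s) := by
  have hinjI : Set.InjOn Prod.fst (I : Set (ℕ × ℕ)) := by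
    rw [← Finset.card_image_iff, hIimg, hIcard]
  set A : Finset ℕ := Finset.Icc 1 n \ I.image Prod.fst with hA
  have hAcard : A.card = n - s := by
    rw [hA, Finset.card_sdiff_of_subset, Nat.card_Icc, hIimg, Nat.add_sub_cancel]
    intro x hx
    obtain ⟨p, hp, rfl⟩ := Finset.mem_image.mp hx
    exact (Finset.mem_product.mp (hIbox hp)).1
  rw [← hAcard, ← count_signed A (r - s) k]
  refine Finset.card_bij' (fun F _ => F \ I) (fun G _ => G ∪ I) ?_ ?_ ?_ ?_
  · intro F hF
    simp only [L, mem_filter, mem_powerset] at hF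
    obtain ⟨⟨hFbox, hFcard, hFimg⟩, hIF⟩ := hF
    have hinjF : Set.InjOn Prod.fst (F : Set (ℕ × ℕ)) := by
      rw [← Finset.card_image_iff, hFimg, hFcard]
    simp only [mem_filter, mem_powerset]
    have hdcard : (F \ I).card = r - s := by
      rw [Finset.card_sdiff_of_subset hIF, hFcard, hIcard]
    refine ⟨?_, hdcard, ?_⟩
    · intro p hp
      obtain ⟨hpF, hpI⟩ := Finset.mem_sdiff.mp hp
      have hpbox := Finset.mem_product.mp (hFbox hpF)
      refine Finset.mem_product.mpr ⟨Finset.mem_sdiff.mpr ⟨hpbox.1, ?_⟩, hpbox.2⟩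
      intro hx
      obtain ⟨q, hq, hq2⟩ := Finset.mem_image.mp hx
      have : q = p := hinjF (hIF hq) hpF hq2
      exact hpI (this ▸ hq)
    · rw [Finset.card_image_of_injOn (hinjF.mono (by simp [Set.diff_subset])), hdcard]
  · intro G hG
    simp only [mem_filter, mem_powerset] at hG
    obtain ⟨hGsub, hGcard, hGimg⟩ := hG
    have hdisj : Disjoint G I := by
      rw [Finset.disjoint_left]
      intro p hpG hpI
      have := (Finset.mem_product.mp (hGsub hpG)).1
      rw [hA, Finset.mem_sdiff] at this
      exact this.2 (Finset.mem_image_of_mem _ hpI)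
    have himgdisj : Disjoint (G.image Prod.fst) (I.image Prod.fst) := by
      rw [Finset.disjoint_left]
      intro x hxG hxI
      obtain ⟨p, hp, rfl⟩ := Finset.mem_image.mp hxG
      have := (Finset.mem_product.mp (hGsub hp)).1
      rw [hA, Finset.mem_sdiff] at this
      exact this.2 hxI
    simp only [L, mem_filter, mem_powerset]
    have hucard : (G ∪ I).card = r := by
      rw [Finset.card_union_of_disjoint hdisj, hGcard, hIcard]
      omega
    refine ⟨⟨?_, hucard, ?_⟩, Finset.subset_union_right⟩
    · intro p hp
      rcases Finset.mem_union.mp hp with h | h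
      · have := Finset.mem_product.mp (hGsub h)
        rw [hA] at this
        exact Finset.mem_product.mpr ⟨(Finset.mem_sdiff.mp this.1).1, this.2⟩
      · exact hIbox h
    · rw [Finset.image_union, Finset.card_union_of_disjoint himgdisj, hGimg, hIimg]
      omega
  · intro F hF
    simp only [mem_filter] at hF
    exact Finset.sdiff_union_of_subset hF.2
  · intro G hG
    simp only [mem_filter, mem_powerset] at hG
    have hdisj : Disjoint G I := by
      rw [Finset.disjoint_left]
      intro p hpG hpI
      have := (Finset.mem_product.mp (hG.1 hpG)).1
      rw [hA, Finset.mem_sdiff] at this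
      exact this.2 (Finset.mem_image_of_mem _ hpI)
    show (G ∪ I) \ I = G
    rw [Finset.union_sdiff_cancel_right hdisj]

lemma msig_image_fst (d : ℕ) : (Msig d).image Prod.fst = Finset.Icc 1 d := by
  rw [Msig, Finset.image_image]
  exact Finset.image_id

lemma msig_card (d : ℕ) : (Msig d).card = d := by
  rw [Msig, Finset.card_image_of_injective _ (fun x y h => congrArg Prod.fst h), Nat.card_Icc,
    Nat.add_sub_cancel]

lemma msig_mono {t a : ℕ} (h : t ≤ a) : Msig t ⊆ Msig a :=
  Finset.image_subset_image (Finset.Icc_subset_Icc_right h)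

lemma msig_mem {d : ℕ} {p : ℕ × ℕ} : p ∈ Msig d ↔ 1 ≤ p.1 ∧ p.1 ≤ d ∧ p.2 = 1 := by
  rw [Msig]
  constructor
  · intro hp
    obtain ⟨x, hx, rfl⟩ := Finset.mem_image.mp hp
    rw [Finset.mem_Icc] at hx
    exact ⟨hx.1, hx.2, rfl⟩
  · rintro ⟨h1, h2, h3⟩
    refine Finset.mem_image.mpr ⟨p.1, Finset.mem_Icc.mpr ⟨h1, h2⟩, ?_⟩
    rw [← h3]

lemma msig_subset_box {d n k : ℕ} (hd : d ≤ n) (hk : 1 ≤ k) : Msig d ⊆ box n k := by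
  intro p hp
  rw [msig_mem] at hp
  exact Finset.mem_product.mpr ⟨Finset.mem_Icc.mpr ⟨hp.1, le_trans hp.2.1 hd⟩,
    Finset.mem_Icc.mpr ⟨by omega, by omega⟩⟩

theorem double_count_first (n r k t a : ℕ) (hn : 0 < n) (ht : 0 < t)
    (hk : 2 ≤ k) (htr : t + 1 ≤ r) (hrn : r ≤ n) (hta : t + 1 ≤ a) (han : a ≤ n) :
    ∑ i ∈ Finset.Icc 1 (a - t),
        i * ((L n r k).filter (fun F => Msig t ⊆ F ∧ (F ∩ Msig a).card = t + i)).card =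
      (a - t) * (n - t - 1).choose (r - t - 1) * k ^ (r - t - 1) := by
  set E := (L n r k).filter (fun F => Msig t ⊆ F) with hE
  have hsub : ∀ F, Msig t ⊆ F → Msig t ⊆ F ∩ Msig a := fun F h =>
    Finset.subset_inter h (msig_mono (by omega))
  have hle : ∀ F, Msig t ⊆ F → t ≤ (F ∩ Msig a).card := by
    intro F h
    calc t = (Msig t).card := (msig_card t).symm
      _ ≤ (F ∩ Msig a).card := Finset.card_le_card (hsub F h)
  -- Step 1: each term equals a sum over a fiber of E
  have step1 : ∀ i ∈ Finset.Icc 1 (a - t),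
      i * ((L n r k).filter (fun F => Msig t ⊆ F ∧ (F ∩ Msig a).card = t + i)).card
      = ∑ F ∈ E.filter (fun F => (F ∩ Msig a).card - t = i), ((F ∩ Msig a).card - t) := by
    intro i hi
    rw [Finset.mem_Icc] at hi
    have hfib : E.filter (fun F => (F ∩ Msig a).card - t = i)
        = (L n r k).filter (fun F => Msig t ⊆ F ∧ (F ∩ Msig a).card = t + i) := by
      rw [hE, Finset.filter_filter]
      apply Finset.filter_congr
      intro F _
      constructor
      · rintro ⟨h1, h2⟩
        have := hle F h1
        exact ⟨h1, by omega⟩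
      · rintro ⟨h1, h2⟩
        exact ⟨h1, by omega⟩
    rw [← hfib, Finset.sum_congr rfl (fun F hF => (Finset.mem_filter.mp hF).2),
      Finset.sum_const, smul_eq_mul, mul_comm]
  rw [Finset.sum_congr rfl step1]
  -- Step 2: extend the sum to Icc 0 (a - t)
  have hinsert : Finset.Icc 0 (a - t) = insert 0 (Finset.Icc 1 (a - t)) := by
    ext x
    simp only [Finset.mem_Icc, Finset.mem_insert]
    omega
  have hzero : ∑ F ∈ E.filter (fun F => (F ∩ Msig a).card - t = 0), ((F ∩ Msig a).card - t) = 0 :=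
    Finset.sum_eq_zero (fun F hF => (Finset.mem_filter.mp hF).2)
  have hext : ∑ i ∈ Finset.Icc 1 (a - t), ∑ F ∈ E.filter (fun F => (F ∩ Msig a).card - t = i), ((F ∩ Msig a).card - t)
      = ∑ F ∈ E, ((F ∩ Msig a).card - t) := by
    rw [← Finset.sum_fiberwise_of_maps_to (g := fun F => (F ∩ Msig a).card - t) (t := Finset.Icc 0 (a - t))
      (fun F hF => by
        rw [Finset.mem_Icc]
        refine ⟨Nat.zero_le _, ?_⟩
        have : (F ∩ Msig a).card ≤ a := by
          calc (F ∩ Msig a).card ≤ (Msig a).card := Finset.card_le_card Finset.inter_subset_right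
            _ = a := msig_card a
        show (F ∩ Msig a).card - t ≤ a - t
        omega) (fun F => (F ∩ Msig a).card - t), hinsert,
      Finset.sum_insert (by simp), hzero, zero_add]
  rw [hext]
  -- Step 3: (F ∩ Msig a).card - t = card of F ∩ (Msig a \ Msig t)
  have step3 : ∀ F ∈ E, (F ∩ Msig a).card - t = (F ∩ (Msig a \ Msig t)).card := by
    intro F hF
    have hMt : Msig t ⊆ F := (Finset.mem_filter.mp hF).2
    have h1 : F ∩ (Msig a \ Msig t) = (F ∩ Msig a) \ Msig t := by
      ext p
      simp only [Finset.mem_inter, Finset.mem_sdiff]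
      tauto
    rw [h1, Finset.card_sdiff_of_subset (hsub F hMt), msig_card]
  rw [Finset.sum_congr rfl step3]
  -- Step 4: swap to a sum over points
  have step4 : ∀ F : Finset (ℕ × ℕ), (F ∩ (Msig a \ Msig t)).card
      = ∑ p ∈ Msig a \ Msig t, (if p ∈ F then 1 else 0) := by
    intro F
    have : F ∩ (Msig a \ Msig t) = (Msig a \ Msig t).filter (fun p => p ∈ F) := by
      ext p
      simp only [Finset.mem_inter, Finset.mem_filter]
      tauto
    rw [this, Finset.card_filter]
  rw [Finset.sum_congr rfl (fun F _ => step4 F), Finset.sum_comm]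
  -- Step 5: inner sums are counts of supersets
  have step5 : ∀ p ∈ Msig a \ Msig t,
      ∑ F ∈ E, (if p ∈ F then 1 else 0)
      = (n - t - 1).choose (r - t - 1) * k ^ (r - t - 1) := by
    intro p hp
    rw [← Finset.card_filter]
    obtain ⟨hpa, hpt⟩ := Finset.mem_sdiff.mp hp
    have hpnotin : p ∉ Msig t := hpt
    rw [msig_mem] at hpa hpt
    obtain ⟨hx1, hxa, hx1'⟩ := hpa
    have hxt : t < p.1 := by
      by_contra h
      exact hpt ⟨hx1, by omega, hx1'⟩
    have hfilt : E.filter (fun F => p ∈ F)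
        = (L n r k).filter (fun F => insert p (Msig t) ⊆ F) := by
      rw [hE, Finset.filter_filter]
      apply Finset.filter_congr
      intro F _
      rw [Finset.insert_subset_iff]
      tauto
    rw [hfilt]
    have hbox : insert p (Msig t) ⊆ box n k := by
      rw [Finset.insert_subset_iff]
      refine ⟨Finset.mem_product.mpr ⟨Finset.mem_Icc.mpr ⟨hx1, by omega⟩,
        Finset.mem_Icc.mpr ⟨by omega, by omega⟩⟩, msig_subset_box (by omega) (by omega)⟩
    have hcard : (insert p (Msig t)).card = t + 1 := by
      rw [Finset.card_insert_of_notMem hpnotin, msig_card]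
    have himg : ((insert p (Msig t)).image Prod.fst).card = t + 1 := by
      rw [Finset.image_insert, msig_image_fst, Finset.card_insert_of_notMem
        (by rw [Finset.mem_Icc]; omega), Nat.card_Icc, Nat.add_sub_cancel]
    have := count_supset n r k (t + 1) (insert p (Msig t)) hbox hcard himg htr
    rw [this, Nat.sub_sub, Nat.sub_sub]
  rw [Finset.sum_congr rfl step5, Finset.sum_const, Finset.card_sdiff_of_subset (msig_mono (by omega)),
    msig_card, msig_card, smul_eq_mul, mul_assoc]
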